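/- Let ℓ ≥ 1, 1 ≤ i ≤ ℓ, and 0 ≤ s ≤ ℓ. Then p_{i|s} ≥ 1 − 2^{−(s−i)}. -/

import Mathlib

open scoped Classical

noncomputable section

/-- `E_j`: the span of the first `j` standard basis vectors of `F₂^ℓ`. -/
def Ej (ℓ j : ℕ) : Submodule (ZMod 2) (Fin ℓ → ZMod 2) :=
  Submodule.span (ZMod 2) {v | ∃ k : Fin ℓ, (k : ℕ) < j ∧ v = Pi.single k 1}

/-- The average conditional erasure probability `p_{i|s}` (with `i` 1-indexed): the fraction
of `(ℓ-s)`-dimensional subspaces `R` of `F₂^ℓ` with `R ∩ (E_i \ E_{i-1}) = ∅`. -/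
def pis (ℓ i s : ℕ) : ℝ :=
  (Nat.card {R : Submodule (ZMod 2) (Fin ℓ → ZMod 2) //
      Module.finrank (ZMod 2) ↥R = ℓ - s ∧
      (R : Set (Fin ℓ → ZMod 2)) ∩ ((Ej ℓ i : Set (Fin ℓ → ZMod 2)) \
        (Ej ℓ (i - 1) : Set (Fin ℓ → ZMod 2))) = ∅} : ℝ) /
  (Nat.card {R : Submodule (ZMod 2) (Fin ℓ → ZMod 2) //
      Module.finrank (ZMod 2) ↥R = ℓ - s} : ℝ)

/-- The 2-Gaussian binomial coefficient `[a choose t]₂`, as a real number. -/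
def gaussBinom (a t : ℕ) : ℝ :=
  ∏ j ∈ Finset.range t, ((2 ^ a - 2 ^ j : ℝ) / (2 ^ t - 2 ^ j : ℝ))

/-- The average erasure probability `F_i(z)` of the `i`-th bit-channel (`i` 1-indexed). -/
def Favg (ℓ i : ℕ) (z : ℝ) : ℝ :=
  ∑ s ∈ Finset.range (ℓ + 1), (Nat.choose ℓ s : ℝ) * z ^ s * (1 - z) ^ (ℓ - s) * pis ℓ i s

lemma exists_lequiv_map {K W : Type*} [Field K] [AddCommGroup W] [Module K W]
    {v w : W} (hv : v ≠ 0) (hw : w ≠ 0) : ∃ e : W ≃ₗ[K] W, e v = w := by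
  have hv' := (linearIndepOn_singleton_iff K (v := (id : W → W)) (i := v)).mpr hv
  have hw' := (linearIndepOn_singleton_iff K (v := (id : W → W)) (i := w)).mpr hw
  let bv := Module.Basis.extend hv'
  let bw := Module.Basis.extend hw'
  have hvm : v ∈ hv'.extend (Set.subset_univ _) :=
    hv'.subset_extend _ (Set.mem_singleton v)
  have hwm : w ∈ hw'.extend (Set.subset_univ _) :=
    hw'.subset_extend _ (Set.mem_singleton w)
  let e0 := Module.Basis.indexEquiv bv bw
  let e1 := e0.trans (Equiv.swap (e0 ⟨v, hvm⟩) ⟨w, hwm⟩)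
  refine ⟨bv.equiv bw e1, ?_⟩
  have h1 : (bv.equiv bw e1) (bv ⟨v, hvm⟩) = bw (e1 ⟨v, hvm⟩) := Module.Basis.equiv_apply bv _ bw e1
  have h2 : bv ⟨v, hvm⟩ = v := Module.Basis.extend_apply_self hv' _
  have h3 : e1 ⟨v, hvm⟩ = ⟨w, hwm⟩ := by simp [e1]
  rw [h2] at h1
  rw [h1, h3]
  exact Module.Basis.extend_apply_self hw' _

instance subFinite (ℓ : ℕ) : Finite (Submodule (ZMod 2) (Fin ℓ → ZMod 2)) :=
  Finite.of_injective (fun R => (R : Set (Fin ℓ → ZMod 2))) SetLike.coe_injective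

noncomputable instance subFintype (ℓ : ℕ) : Fintype (Submodule (ZMod 2) (Fin ℓ → ZMod 2)) :=
  Fintype.ofFinite _

lemma filter_card_eq {α : Type*} [Fintype α] (p : α → Prop) [DecidablePred p] :
    (Finset.univ.filter p).card = Nat.card {x // p x} := by
  rw [Nat.card_eq_fintype_card]
  exact ((Fintype.card_congr (Equiv.refl _)).trans (Fintype.card_subtype p)).symm

lemma natCard_sub (ℓ : ℕ) (R : Submodule (ZMod 2) (Fin ℓ → ZMod 2)) :
    Nat.card R = 2 ^ Module.finrank (ZMod 2) R := by
  rw [Nat.card_eq_fintype_card, Module.card_eq_pow_finrank (K := ZMod 2), ZMod.card]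

lemma card_add_compl {α : Type*} [Fintype α] (p q : α → Prop) :
    Nat.card {x // p x ∧ q x} + Nat.card {x // p x ∧ ¬ q x} = Nat.card {x // p x} := by
  have h := Nat.card_congr
    ((((Equiv.subtypeSubtypeEquivSubtypeInter p q).symm.sumCongr
      (Equiv.subtypeSubtypeEquivSubtypeInter p (fun x => ¬ q x)).symm).trans
      (Equiv.sumCompl (fun x : {y // p y} => q x.1))))
  rw [← h, Nat.card_sum]

set_option maxHeartbeats 1000000 in
lemma M_const (ℓ k : ℕ) {v w : Fin ℓ → ZMod 2} (hv : v ≠ 0) (hw : w ≠ 0) :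
    Nat.card {R : Submodule (ZMod 2) (Fin ℓ → ZMod 2) //
        Module.finrank (ZMod 2) R = k ∧ v ∈ R}
      = Nat.card {R : Submodule (ZMod 2) (Fin ℓ → ZMod 2) //
        Module.finrank (ZMod 2) R = k ∧ w ∈ R} := by
  obtain ⟨e, he⟩ := exists_lequiv_map (K := ZMod 2) hv hw
  refine Nat.card_congr (Equiv.subtypeEquiv (Submodule.orderIsoMapComap e).toEquiv ?_)
  intro R
  have h1 := LinearEquiv.finrank_map_eq e R
  have h2 : w ∈ Submodule.map (e : (Fin ℓ → ZMod 2) →ₗ[ZMod 2] (Fin ℓ → ZMod 2)) R ↔ v ∈ R := by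
    rw [Submodule.mem_map_equiv,
      show e.symm w = v from by rw [← he]; exact e.symm_apply_apply v]
  have h3 : ((Submodule.orderIsoMapComap e).toEquiv R : Submodule (ZMod 2) (Fin ℓ → ZMod 2))
      = Submodule.map (e : (Fin ℓ → ZMod 2) →ₗ[ZMod 2] (Fin ℓ → ZMod 2)) R := rfl
  rw [h3, h1, h2]

lemma exists_rank (ℓ m : ℕ) (hm : m ≤ ℓ) :
    ∃ R : Submodule (ZMod 2) (Fin ℓ → ZMod 2), Module.finrank (ZMod 2) R = m := by
  refine ⟨Submodule.span (ZMod 2)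
    (Set.range fun j : Fin m => Pi.single (Fin.castLE hm j) (1 : ZMod 2)), ?_⟩
  have h := ((Pi.basisFun (ZMod 2) (Fin ℓ)).linearIndependent).comp
    (Fin.castLE hm) (Fin.castLE_injective hm)
  have heq : (⇑(Pi.basisFun (ZMod 2) (Fin ℓ)) ∘ Fin.castLE hm)
      = fun j : Fin m => Pi.single (Fin.castLE hm j) (1 : ZMod 2) := by
    funext j; simp
  rw [heq] at h
  rw [finrank_span_eq_card h, Fintype.card_fin]

lemma finrank_Ej_le (ℓ i : ℕ) : Module.finrank (ZMod 2) (Ej ℓ i) ≤ i := by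
  have hsub : {v : Fin ℓ → ZMod 2 | ∃ k : Fin ℓ, (k : ℕ) < i ∧ v = Pi.single k 1}
      = (fun k : Fin ℓ => Pi.single k (1 : ZMod 2)) '' {k : Fin ℓ | (k : ℕ) < i} := by
    ext x
    simp only [Set.mem_setOf_eq, Set.mem_image]
    exact ⟨fun ⟨k, h1, h2⟩ => ⟨k, h1, h2.symm⟩, fun ⟨k, h1, h2⟩ => ⟨k, h1, h2.symm⟩⟩
  rw [Ej, hsub]
  refine le_trans (finrank_span_le_card _) ?_
  rw [Set.toFinset_image]
  refine le_trans Finset.card_image_le ?_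
  have hs : {k : Fin ℓ | (k : ℕ) < i}.toFinset.image Fin.val ⊆ Finset.range i := by
    intro x hx
    simp only [Finset.mem_image, Set.mem_toFinset, Set.mem_setOf_eq] at hx
    obtain ⟨k, hk, rfl⟩ := hx
    simpa using hk
  have h2 := Finset.card_le_card hs
  rwa [Finset.card_image_of_injective _ Fin.val_injective, Finset.card_range] at h2

lemma double_count (ℓ k : ℕ) {v : Fin ℓ → ZMod 2} (hv : v ≠ 0) :
    Nat.card {R : Submodule (ZMod 2) (Fin ℓ → ZMod 2) //
        Module.finrank (ZMod 2) ↥R = k} * (2 ^ k - 1)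
      = (2 ^ ℓ - 1) *
        Nat.card {R : Submodule (ZMod 2) (Fin ℓ → ZMod 2) //
          Module.finrank (ZMod 2) ↥R = k ∧ v ∈ R} := by
  classical
  set P : Submodule (ZMod 2) (Fin ℓ → ZMod 2) → Prop :=
    fun R => Module.finrank (ZMod 2) ↥R = k with hPdef
  have hstep1 : ∀ R ∈ Finset.univ.filter P,
      (Finset.univ.filter (fun x : Fin ℓ → ZMod 2 => x ∈ R ∧ x ≠ 0)).card = 2 ^ k - 1 := by
    intro R hR
    have hPR : P R := by simpa using hR
    have h0 : (0 : Fin ℓ → ZMod 2) ∈ Finset.univ.filter (fun x => x ∈ R) := by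
      simp [R.zero_mem]
    have he : Finset.univ.filter (fun x : Fin ℓ → ZMod 2 => x ∈ R ∧ x ≠ 0)
        = (Finset.univ.filter (fun x => x ∈ R)).erase 0 := by
      ext x
      simp only [Finset.mem_filter, Finset.mem_univ, true_and, Finset.mem_erase]
      tauto
    rw [he, Finset.card_erase_of_mem h0, filter_card_eq]
    have h2 : Nat.card {x // x ∈ R} = 2 ^ k := by
      rw [show Nat.card {x // x ∈ R} = Nat.card R from rfl, natCard_sub, hPR]
    rw [h2]
  have hswap : ∑ R ∈ Finset.univ.filter P,
        (Finset.univ.filter (fun x : Fin ℓ → ZMod 2 => x ∈ R ∧ x ≠ 0)).card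
      = ∑ x ∈ Finset.univ.filter (fun x : Fin ℓ → ZMod 2 => x ≠ 0),
        (Finset.univ.filter (fun R => P R ∧ x ∈ R)).card := by
    have hff : ∀ x : Fin ℓ → ZMod 2,
        Finset.univ.filter (fun R => P R ∧ x ∈ R)
          = (Finset.univ.filter P).filter (fun R => x ∈ R) := by
      intro x
      ext R
      simp only [Finset.mem_filter, Finset.mem_univ, true_and, and_comm]
    calc ∑ R ∈ Finset.univ.filter P,
          (Finset.univ.filter (fun x : Fin ℓ → ZMod 2 => x ∈ R ∧ x ≠ 0)).card
        = ∑ x : Fin ℓ → ZMod 2, ∑ R ∈ Finset.univ.filter P,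
            (if x ∈ R ∧ x ≠ 0 then 1 else 0) := by
          simp_rw [Finset.card_filter]
          exact Finset.sum_comm
      _ = ∑ x : Fin ℓ → ZMod 2, (if x ≠ 0 then
            (∑ R ∈ Finset.univ.filter P, (if x ∈ R then 1 else 0)) else 0) := by
          refine Finset.sum_congr rfl fun x _ => ?_
          by_cases hx : x = 0 <;> simp [hx]
      _ = ∑ x ∈ Finset.univ.filter (fun x : Fin ℓ → ZMod 2 => x ≠ 0),
            ∑ R ∈ Finset.univ.filter P, (if x ∈ R then 1 else 0) :=
          (Finset.sum_filter _ _).symm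
      _ = ∑ x ∈ Finset.univ.filter (fun x : Fin ℓ → ZMod 2 => x ≠ 0),
            (Finset.univ.filter (fun R => P R ∧ x ∈ R)).card := by
          refine Finset.sum_congr rfl fun x _ => ?_
          rw [hff, Finset.card_filter]
  have hM : ∀ x ∈ Finset.univ.filter (fun x : Fin ℓ → ZMod 2 => x ≠ 0),
      (Finset.univ.filter (fun R => P R ∧ x ∈ R)).card
        = Nat.card {R : Submodule (ZMod 2) (Fin ℓ → ZMod 2) //
            Module.finrank (ZMod 2) ↥R = k ∧ v ∈ R} := by
    intro x hx
    have hx0 : x ≠ 0 := by simpa using hx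
    rw [filter_card_eq]
    exact M_const ℓ k hx0 hv
  have hcard0 : (Finset.univ.filter (fun x : Fin ℓ → ZMod 2 => x ≠ 0)).card = 2 ^ ℓ - 1 := by
    rw [Finset.filter_ne', Finset.card_erase_of_mem (Finset.mem_univ _), Finset.card_univ]
    congr 1
    rw [Fintype.card_fun, ZMod.card, Fintype.card_fin]
  rw [show Nat.card {R : Submodule (ZMod 2) (Fin ℓ → ZMod 2) //
      Module.finrank (ZMod 2) ↥R = k} = (Finset.univ.filter P).card from (filter_card_eq P).symm]
  calc (Finset.univ.filter P).card * (2 ^ k - 1)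
      = ∑ _R ∈ Finset.univ.filter P, (2 ^ k - 1) := by
        rw [Finset.sum_const, smul_eq_mul]
    _ = ∑ R ∈ Finset.univ.filter P,
          (Finset.univ.filter (fun x : Fin ℓ → ZMod 2 => x ∈ R ∧ x ≠ 0)).card :=
        (Finset.sum_congr rfl hstep1).symm
    _ = ∑ x ∈ Finset.univ.filter (fun x : Fin ℓ → ZMod 2 => x ≠ 0),
          (Finset.univ.filter (fun R => P R ∧ x ∈ R)).card := hswap
    _ = ∑ _x ∈ Finset.univ.filter (fun x : Fin ℓ → ZMod 2 => x ≠ 0),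
          Nat.card {R : Submodule (ZMod 2) (Fin ℓ → ZMod 2) //
            Module.finrank (ZMod 2) ↥R = k ∧ v ∈ R} := Finset.sum_congr rfl hM
    _ = (2 ^ ℓ - 1) * Nat.card {R : Submodule (ZMod 2) (Fin ℓ → ZMod 2) //
            Module.finrank (ZMod 2) ↥R = k ∧ v ∈ R} := by
        rw [Finset.sum_const, smul_eq_mul, hcard0]

lemma final_ineq (G B T n : ℕ) (hGB : G + B = T) (hkey : B * 2 ^ n ≤ T) (hT : 0 < T) :
    1 - ((2 : ℝ) ^ n)⁻¹ ≤ (G : ℝ) / (T : ℝ) := by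
  have hTpos : (0 : ℝ) < T := by exact_mod_cast hT
  have h2n : (0 : ℝ) < 2 ^ n := by positivity
  have hGeq : (G : ℝ) = (T : ℝ) - B := by
    have : (G : ℝ) + B = T := by exact_mod_cast hGB
    linarith
  have hk : (B : ℝ) * 2 ^ n ≤ T := by exact_mod_cast hkey
  have hBT : (B : ℝ) / T ≤ ((2 : ℝ) ^ n)⁻¹ := by
    rw [div_le_iff₀ hTpos, inv_mul_eq_div, le_div_iff₀ h2n]
    exact hk
  have : (G : ℝ) / T = 1 - (B : ℝ) / T := by
    rw [hGeq, sub_div, div_self hTpos.ne']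
  rw [this]
  linarith

theorem stmt12 (ℓ i s : ℕ) (hℓ : 1 ≤ ℓ) (hi : 1 ≤ i) (hiℓ : i ≤ ℓ) (hs : s ≤ ℓ) :
    pis ℓ i s ≥ 1 - (2 : ℝ) ^ (-((s : ℤ) - (i : ℤ))) := by
  classical
  have hTfin : 0 < Nat.card {R : Submodule (ZMod 2) (Fin ℓ → ZMod 2) //
      Module.finrank (ZMod 2) ↥R = ℓ - s} := by
    obtain ⟨R₀, hR₀⟩ := exists_rank ℓ (ℓ - s) (Nat.sub_le ℓ s)
    have : Nonempty {R : Submodule (ZMod 2) (Fin ℓ → ZMod 2) //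
        Module.finrank (ZMod 2) ↥R = ℓ - s} := ⟨⟨R₀, hR₀⟩⟩
    exact Nat.card_pos
  by_cases hcase : s ≤ i
  · have h1 : (0 : ℝ) ≤ pis ℓ i s := div_nonneg (Nat.cast_nonneg _) (Nat.cast_nonneg _)
    have hn : (0 : ℤ) ≤ -((s : ℤ) - i) := by omega
    have h2 : (1 : ℝ) ≤ 2 ^ (-((s : ℤ) - i)) := one_le_zpow₀ (by norm_num) hn
    linarith
  · push_neg at hcase
    -- i < s
    set Q : Submodule (ZMod 2) (Fin ℓ → ZMod 2) → Prop := fun R =>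
      (R : Set (Fin ℓ → ZMod 2)) ∩ ((Ej ℓ i : Set (Fin ℓ → ZMod 2)) \
        (Ej ℓ (i - 1) : Set (Fin ℓ → ZMod 2))) = ∅ with hQdef
    set v₀ : Fin ℓ → ZMod 2 := Pi.single (⟨i - 1, by omega⟩ : Fin ℓ) 1 with hv₀def
    have hv₀ : v₀ ≠ 0 := by
      intro h
      have := congrFun h (⟨i - 1, by omega⟩ : Fin ℓ)
      rw [hv₀def] at this
      simp only [Pi.single_eq_same, Pi.zero_apply] at this
      exact one_ne_zero this
    set M := Nat.card {R : Submodule (ZMod 2) (Fin ℓ → ZMod 2) //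
      Module.finrank (ZMod 2) ↥R = ℓ - s ∧ v₀ ∈ R} with hMdef
    set T := Nat.card {R : Submodule (ZMod 2) (Fin ℓ → ZMod 2) //
      Module.finrank (ZMod 2) ↥R = ℓ - s} with hTdef
    set B := Nat.card {R : Submodule (ZMod 2) (Fin ℓ → ZMod 2) //
      Module.finrank (ZMod 2) ↥R = ℓ - s ∧ ¬ Q R} with hBdef
    set G := Nat.card {R : Submodule (ZMod 2) (Fin ℓ → ZMod 2) //
      Module.finrank (ZMod 2) ↥R = ℓ - s ∧ Q R} with hGdef
    have hGB : G + B = T :=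
      card_add_compl (fun R : Submodule (ZMod 2) (Fin ℓ → ZMod 2) => Module.finrank (ZMod 2) ↥R = ℓ - s) Q
    have hDC : T * (2 ^ (ℓ - s) - 1) = (2 ^ ℓ - 1) * M := double_count ℓ (ℓ - s) hv₀
    -- union bound: B ≤ 2^i * M
    have hB : B ≤ 2 ^ i * M := by
      rw [hBdef, ← filter_card_eq]
      have hsub : Finset.univ.filter
          (fun R : Submodule (ZMod 2) (Fin ℓ → ZMod 2) =>
            Module.finrank (ZMod 2) ↥R = ℓ - s ∧ ¬ Q R) ⊆
          (Finset.univ.filter (fun x : Fin ℓ → ZMod 2 => x ∈ Ej ℓ i ∧ x ≠ 0)).biUnion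
            (fun x => Finset.univ.filter
              (fun R : Submodule (ZMod 2) (Fin ℓ → ZMod 2) =>
                Module.finrank (ZMod 2) ↥R = ℓ - s ∧ x ∈ R)) := by
        intro R hR
        simp only [Finset.mem_filter, Finset.mem_univ, true_and] at hR
        obtain ⟨hP, hQ⟩ := hR
        obtain ⟨x, hxR, hxD⟩ := Set.nonempty_iff_ne_empty.mpr hQ
        have hx0 : x ≠ 0 := by
          intro h
          exact hxD.2 (h ▸ (Ej ℓ (i - 1)).zero_mem)
        refine Finset.mem_biUnion.mpr ⟨x, ?_, ?_⟩
        · simp only [Finset.mem_filter, Finset.mem_univ, true_and]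
          exact ⟨hxD.1, hx0⟩
        · simp only [Finset.mem_filter, Finset.mem_univ, true_and]
          exact ⟨hP, hxR⟩
      refine le_trans (Finset.card_le_card hsub) (le_trans Finset.card_biUnion_le ?_)
      have hMx : ∀ x ∈ Finset.univ.filter (fun x : Fin ℓ → ZMod 2 => x ∈ Ej ℓ i ∧ x ≠ 0),
          (Finset.univ.filter
            (fun R : Submodule (ZMod 2) (Fin ℓ → ZMod 2) =>
              Module.finrank (ZMod 2) ↥R = ℓ - s ∧ x ∈ R)).card = M := by
        intro x hx
        simp only [Finset.mem_filter, Finset.mem_univ, true_and] at hx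
        rw [filter_card_eq, hMdef]
        exact M_const ℓ (ℓ - s) hx.2 hv₀
      rw [Finset.sum_congr rfl hMx, Finset.sum_const, smul_eq_mul]
      have hF : (Finset.univ.filter
          (fun x : Fin ℓ → ZMod 2 => x ∈ Ej ℓ i ∧ x ≠ 0)).card ≤ 2 ^ i := by
        have hsub2 : Finset.univ.filter (fun x : Fin ℓ → ZMod 2 => x ∈ Ej ℓ i ∧ x ≠ 0)
            ⊆ Finset.univ.filter (fun x : Fin ℓ → ZMod 2 => x ∈ Ej ℓ i) := by
          intro x hx
          simp only [Finset.mem_filter, Finset.mem_univ, true_and] at hx ⊢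
          exact hx.1
        refine le_trans (Finset.card_le_card hsub2) ?_
        rw [filter_card_eq]
        rw [show Nat.card {x // x ∈ Ej ℓ i} = Nat.card (Ej ℓ i) from rfl, natCard_sub]
        exact Nat.pow_le_pow_right (by norm_num) (finrank_Ej_le ℓ i)
      exact Nat.mul_le_mul_right M hF
    -- key: B * 2^(s-i) ≤ T
    have e1 : 2 ^ i * 2 ^ (s - i) = 2 ^ s := by
      rw [← pow_add]; congr 1; omega
    have e2 : 2 ^ s * 2 ^ (ℓ - s) = 2 ^ ℓ := by
      rw [← pow_add]; congr 1; omega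
    have hkey : B * 2 ^ (s - i) ≤ T := by
      have h1 : B * 2 ^ (s - i) * (2 ^ ℓ - 1) ≤ T * (2 ^ ℓ - 1) := by
        calc B * 2 ^ (s - i) * (2 ^ ℓ - 1)
            ≤ (2 ^ i * M) * 2 ^ (s - i) * (2 ^ ℓ - 1) :=
              Nat.mul_le_mul_right _ (Nat.mul_le_mul_right _ hB)
          _ = 2 ^ s * ((2 ^ ℓ - 1) * M) := by
              rw [show 2 ^ i * M * 2 ^ (s - i) * (2 ^ ℓ - 1)
                  = (2 ^ i * 2 ^ (s - i)) * ((2 ^ ℓ - 1) * M) by ring, e1]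
          _ = 2 ^ s * (T * (2 ^ (ℓ - s) - 1)) := by rw [← hDC]
          _ = T * (2 ^ s * (2 ^ (ℓ - s) - 1)) := by ring
          _ = T * (2 ^ ℓ - 2 ^ s) := by rw [Nat.mul_sub, mul_one, e2]
          _ ≤ T * (2 ^ ℓ - 1) := by
              refine Nat.mul_le_mul_left T ?_
              have h2s : 1 ≤ 2 ^ s := Nat.one_le_two_pow
              omega
      have hpos : 0 < 2 ^ ℓ - 1 := by
        have : (2 : ℕ) ^ 1 ≤ 2 ^ ℓ := Nat.pow_le_pow_right (by norm_num) hℓ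
        omega
      exact Nat.le_of_mul_le_mul_right h1 hpos
    -- conclude
    rw [ge_iff_le, show -((s : ℤ) - (i : ℤ)) = -(((s - i : ℕ) : ℤ)) by omega,
      zpow_neg, zpow_natCast]
    exact final_ineq G B T (s - i) hGB hkey hTfin

end
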